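/- arXiv:1512.05820 — 3 statements merged into one kernel-verified Lean document; each statement's English description precedes it below -/
import Mathlib

section
/- Let A be symmetric positive-definite, b ∈ ℝⁿ with A x⋆ = b, x̄ ∈ ℝⁿ, and let W ∈ ℝⁿˣʷ and V ∈ ℝⁿˣᵏ have full column rank with Wᵀ A V = 0. Then the A-orthogonal projection of x⋆ onto x̄ + range(W) + range(V) equals x̄ + W ŷ + V v̂, where ŷ = (Wᵀ A W)⁻¹ Wᵀ (b − A x̄) and v̂ = (Vᵀ A V)⁻¹ Vᵀ (b − A x̄); i.e., the Galerkin problems over W and V decouple. -/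
open Matrix

noncomputable def anorm {n : ℕ} (A : Matrix (Fin n) (Fin n) ℝ) (x : Fin n → ℝ) : ℝ :=
  Real.sqrt (x ⬝ᵥ A.mulVec x)

lemma posdef_conj {n m : ℕ} {A : Matrix (Fin n) (Fin n) ℝ} (hA : A.PosDef)
    (W : Matrix (Fin n) (Fin m) ℝ) (hW : Function.Injective W.mulVec) :
    (Wᵀ * A * W).PosDef := by
  rw [posDef_iff_dotProduct_mulVec]
  constructor
  · have h1 : Aᵀ = A := hA.1
    unfold Matrix.IsHermitian
    simp [conjTranspose_eq_transpose_of_trivial, Matrix.transpose_mul, Matrix.mul_assoc, h1]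
  · intro x hx
    have hWx : W.mulVec x ≠ 0 := by
      intro h; apply hx; apply hW; simpa using h
    have := hA.dotProduct_mulVec_pos hWx
    simpa [← mulVec_mulVec, dotProduct_mulVec, vecMul_transpose, Matrix.mul_assoc] using this

/-- For A-orthogonal bases `W`, `V` (i.e. `Wᵀ A V = 0`), the A-orthogonal projection of `x⋆`
onto `x̄ + range W + range V` equals `x̄ + W ŷ + V v̂` with decoupled Galerkin coefficients:
it minimizes the A-norm error over the affine sum. -/
theorem stmt4 {n w k : ℕ} (A : Matrix (Fin n) (Fin n) ℝ) (hA : A.PosDef)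
    (b xstar xbar : Fin n → ℝ) (hx : A.mulVec xstar = b)
    (W : Matrix (Fin n) (Fin w) ℝ) (hW : Function.Injective W.mulVec)
    (V : Matrix (Fin n) (Fin k) ℝ) (hV : Function.Injective V.mulVec)
    (horth : Wᵀ * A * V = 0) :
    let yhat := (Wᵀ * A * W)⁻¹.mulVec (Wᵀ.mulVec (b - A.mulVec xbar))
    let vhat := (Vᵀ * A * V)⁻¹.mulVec (Vᵀ.mulVec (b - A.mulVec xbar))
    ∀ (a : Fin w → ℝ) (c : Fin k → ℝ),
      anorm A (xstar - (xbar + W.mulVec yhat + V.mulVec vhat))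
        ≤ anorm A (xstar - (xbar + W.mulVec a + V.mulVec c)) := by
  intro yhat vhat a c
  have hAsym : Aᵀ = A := hA.1
  have hWA : (Wᵀ * A * W).PosDef := posdef_conj hA W hW
  have hVA : (Vᵀ * A * V).PosDef := posdef_conj hA V hV
  have horth' : Vᵀ * A * W = 0 := by
    have := congrArg Matrix.transpose horth
    simpa [Matrix.transpose_mul, Matrix.mul_assoc, hAsym] using this
  set r : Fin n → ℝ := xstar - (xbar + W.mulVec yhat + V.mulVec vhat) with hr
  have hWinv : (Wᵀ * A * W) * (Wᵀ * A * W)⁻¹ = 1 :=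
    Matrix.mul_nonsing_inv _ (isUnit_iff_ne_zero.mpr hWA.det_pos.ne')
  have hVinv : (Vᵀ * A * V) * (Vᵀ * A * V)⁻¹ = 1 :=
    Matrix.mul_nonsing_inv _ (isUnit_iff_ne_zero.mpr hVA.det_pos.ne')
  have h1W : (Wᵀ * A * W).mulVec yhat = Wᵀ.mulVec (b - A.mulVec xbar) := by
    show (Wᵀ * A * W).mulVec ((Wᵀ * A * W)⁻¹.mulVec (Wᵀ.mulVec (b - A.mulVec xbar))) = _
    rw [mulVec_mulVec, hWinv, one_mulVec]
  have h1V : (Vᵀ * A * V).mulVec vhat = Vᵀ.mulVec (b - A.mulVec xbar) := by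
    show (Vᵀ * A * V).mulVec ((Vᵀ * A * V)⁻¹.mulVec (Vᵀ.mulVec (b - A.mulVec xbar))) = _
    rw [mulVec_mulVec, hVinv, one_mulVec]
  clear_value yhat vhat
  have hr' : r = (xstar - xbar) - W.mulVec yhat - V.mulVec vhat := by rw [hr]; abel
  have hWr : Wᵀ.mulVec (A.mulVec r) = 0 := by
    have e0 : (Wᵀ * A).mulVec (xstar - xbar) = Wᵀ.mulVec (b - A.mulVec xbar) := by
      rw [← mulVec_mulVec, mulVec_sub, hx]
    rw [mulVec_mulVec, hr', mulVec_sub, mulVec_sub, mulVec_mulVec, mulVec_mulVec,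
        h1W, horth, zero_mulVec, e0]
    simp
  have hVr : Vᵀ.mulVec (A.mulVec r) = 0 := by
    have e0 : (Vᵀ * A).mulVec (xstar - xbar) = Vᵀ.mulVec (b - A.mulVec xbar) := by
      rw [← mulVec_mulVec, mulVec_sub, hx]
    rw [mulVec_mulVec, hr', mulVec_sub, mulVec_sub, mulVec_mulVec, mulVec_mulVec,
        h1V, horth', zero_mulVec, e0]
    simp
  set d : Fin n → ℝ := W.mulVec (yhat - a) + V.mulVec (vhat - c) with hd
  have hdecomp : xstar - (xbar + W.mulVec a + V.mulVec c) = r + d := by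
    rw [hr, hd, mulVec_sub, mulVec_sub]; abel
  have hcross : d ⬝ᵥ A.mulVec r = 0 := by
    rw [hd, add_dotProduct,
        dotProduct_comm (W.mulVec (yhat - a)), dotProduct_mulVec, ← mulVec_transpose, hWr,
        dotProduct_comm (V.mulVec (vhat - c)), dotProduct_mulVec, ← mulVec_transpose, hVr,
        zero_dotProduct, zero_dotProduct, add_zero]
  have hcross2 : r ⬝ᵥ A.mulVec d = 0 := by
    rw [dotProduct_mulVec, ← mulVec_transpose, hAsym, dotProduct_comm]
    exact hcross
  have hdd : 0 ≤ d ⬝ᵥ A.mulVec d := by simpa using hA.posSemidef.dotProduct_mulVec_nonneg d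
  rw [hdecomp]
  unfold anorm
  apply Real.sqrt_le_sqrt
  have : (r + d) ⬝ᵥ A.mulVec (r + d) = r ⬝ᵥ A.mulVec r + d ⬝ᵥ A.mulVec d := by
    rw [mulVec_add, add_dotProduct, dotProduct_add, dotProduct_add, hcross, hcross2]
    ring
  rw [this]; linarith
end

section
/- Let A, M ∈ ℝⁿˣⁿ be symmetric positive-definite, x⋆ the solution of A x⋆ = b, and let Z ∈ ℝⁿˣᶻ have full column rank with Z* the subspace range(Z). Let x₀ ∈ ℝⁿ, and define η⋆ = (Zᵀ A Z)⁻¹ Zᵀ (b − A x₀). Decompose x⋆ − x₀ = x^∥ + x^⊥, where x^∥ = Z η⋆ is the A-orthogonal projection of x⋆ − x₀ onto range(Z) and x^⊥ is the A-orthogonal complement component. Then for any subspace Y ⊆ range(Z) of dimension y, ‖x⋆ − P^A_{x₀+Y}(x⋆)‖_A ≤ √z · ( Σ_{i=1}^z ‖(I − Π^A_Y)(η⋆_i z_i)‖_A² )^{1/2} + ‖x^⊥‖_A, where z_i are the columns of Z, Π^A_Y is the A-orthogonal projector onto Y, and P^A_{x₀+Y} is the A-orthogonal projector onto the affine subspace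 x₀ + Y. -/
open Matrix

lemma aux_bound {E : Type*} [NormedAddCommGroup E] [InnerProductSpace ℝ E] {z : ℕ}
    (P : E →ₗ[ℝ] E) (hP : ∀ v : E, inner (𝕜 := ℝ) (v - P v) (P v) = 0)
    (g : Fin z → E) (e : E) :
    ‖e - P e‖ ≤ Real.sqrt z * Real.sqrt (∑ i, ‖g i - P (g i)‖ ^ 2) + ‖e - ∑ i, g i‖ := by
  set w : E := ∑ i, g i with hw
  set r : E := e - w with hr
  have hcontr : ‖r - P r‖ ≤ ‖r‖ := by
    have h := norm_add_sq_real (r - P r) (P r)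
    rw [hP r, sub_add_cancel] at h
    nlinarith [norm_nonneg (r - P r), norm_nonneg r, norm_nonneg (P r),
      sq_nonneg (‖P r‖)]
  have hsplit : e - P e = (∑ i, (g i - P (g i))) + (r - P r) := by
    have he : e = w + r := by rw [hr]; abel
    rw [Finset.sum_sub_distrib, ← map_sum, ← hw]
    calc e - P e = (w + r) - P (w + r) := by rw [← he]
      _ = (w - P w) + (r - P r) := by rw [map_add]; abel
  have hCS : ∑ i, ‖g i - P (g i)‖
      ≤ Real.sqrt z * Real.sqrt (∑ i, ‖g i - P (g i)‖ ^ 2) := by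
    have h2 := Finset.sum_mul_sq_le_sq_mul_sq Finset.univ
      (fun _ : Fin z => (1 : ℝ)) (fun i => ‖g i - P (g i)‖)
    simp only [one_pow, one_mul, Finset.sum_const, Finset.card_univ,
      Fintype.card_fin, nsmul_eq_mul, mul_one] at h2
    have hnn : 0 ≤ ∑ i, ‖g i - P (g i)‖ := Finset.sum_nonneg fun i _ => norm_nonneg _
    calc ∑ i, ‖g i - P (g i)‖
        = Real.sqrt ((∑ i, ‖g i - P (g i)‖) ^ 2) := (Real.sqrt_sq hnn).symm
      _ ≤ Real.sqrt ((z : ℝ) * ∑ i, ‖g i - P (g i)‖ ^ 2) :=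
          Real.sqrt_le_sqrt (by linarith [h2])
      _ = Real.sqrt z * Real.sqrt (∑ i, ‖g i - P (g i)‖ ^ 2) :=
          Real.sqrt_mul (by positivity) _
  calc ‖e - P e‖ = ‖(∑ i, (g i - P (g i))) + (r - P r)‖ := by rw [hsplit]
    _ ≤ ‖∑ i, (g i - P (g i))‖ + ‖r - P r‖ := norm_add_le _ _
    _ ≤ (∑ i, ‖g i - P (g i)‖) + ‖r‖ :=
        add_le_add (norm_sum_le _ _) hcontr
    _ ≤ _ := add_le_add hCS le_rfl

/-- Error bound underlying Theorem 1 (Anorm): for a subspace `range Y ⊆ range Z`,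
the A-norm error of the A-orthogonal projection of `x⋆` onto `x₀ + range Y` is bounded by
`√z (Σᵢ ‖(I − Pj^A_Y)(η⋆ᵢ zᵢ)‖_A²)^{1/2} + ‖x^⊥‖_A`. -/
theorem stmt7 {n z y : ℕ} (A : Matrix (Fin n) (Fin n) ℝ) (hA : A.PosDef)
    (b xstar x0 : Fin n → ℝ) (hx : A.mulVec xstar = b)
    (Z : Matrix (Fin n) (Fin z) ℝ) (hZ : Function.Injective Z.mulVec)
    (Y : Matrix (Fin n) (Fin y) ℝ) (hY : Function.Injective Y.mulVec)
    (hYZ : ∀ c : Fin y → ℝ, ∃ d : Fin z → ℝ, Z.mulVec d = Y.mulVec c) :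
    let η : Fin z → ℝ := (Zᵀ * A * Z)⁻¹.mulVec (Zᵀ.mulVec (b - A.mulVec x0))
    let Pj : (Fin n → ℝ) → (Fin n → ℝ) :=
      fun v => Y.mulVec ((Yᵀ * A * Y)⁻¹.mulVec (Yᵀ.mulVec (A.mulVec v)))
    anorm A (xstar - (x0 + Pj (xstar - x0)))
      ≤ Real.sqrt z *
          Real.sqrt (∑ i : Fin z,
            anorm A ((η i • fun p => Z p i) - Pj (η i • fun p => Z p i)) ^ 2)
        + anorm A ((xstar - x0) - Z.mulVec η) := by
  intro η Pj
  letI ngrp : NormedAddCommGroup (Fin n → ℝ) := A.toNormedAddCommGroup hA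
  letI ips : @InnerProductSpace ℝ (Fin n → ℝ) _ ngrp.toSeminormedAddCommGroup :=
    A.toInnerProductSpace hA.posSemidef
  have hAT : Aᵀ = A := by
    calc Aᵀ = Aᴴ := by ext i j; simp [conjTranspose_apply]
      _ = A := hA.1
  -- the Gram matrix is positive definite, hence invertible
  have hG : (Yᵀ * A * Y).PosDef := by
    refine Matrix.PosDef.of_dotProduct_mulVec_pos ?_ ?_
    · have h1 := (hA.posSemidef.conjTranspose_mul_mul_same Y).1
      have hYt : Yᴴ = Yᵀ := by ext i j; simp [conjTranspose_apply]
      rwa [hYt] at h1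
    · intro x hx0
      have hYx : Y.mulVec x ≠ 0 := fun h0 => hx0 (hY (by rw [h0, mulVec_zero]))
      have h2 := hA.dotProduct_mulVec_pos hYx
      rw [star_trivial] at h2
      rw [star_trivial, ← Matrix.mulVec_mulVec, ← Matrix.mulVec_mulVec,
        dotProduct_mulVec, vecMul_transpose]
      exact h2
  have hdet : IsUnit (Yᵀ * A * Y).det := (isUnit_iff_isUnit_det _).1 hG.isUnit
  -- the projection as a linear map
  set P : (Fin n → ℝ) →ₗ[ℝ] (Fin n → ℝ) :=
    Y.mulVecLin ∘ₗ ((Yᵀ * A * Y)⁻¹.mulVecLin ∘ₗ (Yᵀ.mulVecLin ∘ₗ A.mulVecLin)) with hPdef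
  have hPj : ∀ v : Fin n → ℝ, Pj v = P v := fun v => rfl
  -- residuals are A-orthogonal to the range of Y
  have hperp : ∀ v : Fin n → ℝ, Yᵀ *ᵥ (A *ᵥ (v - P v)) = 0 := by
    intro v
    have hstep : Yᵀ *ᵥ (A *ᵥ P v) = Yᵀ *ᵥ (A *ᵥ v) := by
      show Yᵀ *ᵥ (A *ᵥ (Y *ᵥ ((Yᵀ * A * Y)⁻¹ *ᵥ (Yᵀ *ᵥ (A *ᵥ v))))) = _
      simp only [mulVec_mulVec]
      congr 1
      simp only [← Matrix.mul_assoc]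
      rw [Matrix.mul_nonsing_inv _ hdet, Matrix.one_mul]
    rw [mulVec_sub, mulVec_sub, hstep, sub_self]
  have hP : ∀ v : Fin n → ℝ,
      @inner ℝ _ ips.toInner (v - P v) (P v) = 0 := by
    intro v
    show (A *ᵥ (P v)) ⬝ᵥ star (v - P v) = 0
    have hPv : P v = Y *ᵥ ((Yᵀ * A * Y)⁻¹ *ᵥ (Yᵀ *ᵥ (A *ᵥ v))) := rfl
    rw [dotProduct_comm, star_trivial, hPv, dotProduct_mulVec, dotProduct_mulVec,
      ← mulVec_transpose, ← mulVec_transpose, hAT, ← hPv, hperp v, zero_dotProduct]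
  have hanorm : ∀ v : Fin n → ℝ, anorm A v = @norm _ ngrp.toNorm v := fun v => by
    unfold anorm
    change Real.sqrt _ = Real.sqrt (RCLike.re ((A *ᵥ v) ⬝ᵥ star v))
    simp [dotProduct_comm]
  have main := @aux_bound (Fin n → ℝ) ngrp ips z P hP
    (fun i => η i • fun p => Z p i) (xstar - x0)
  have hsum : ∑ i : Fin z, (η i • fun p => Z p i) = Z.mulVec η := by
    ext p
    simp [Matrix.mulVec, dotProduct, Finset.sum_apply, mul_comm]
  rw [show xstar - (x0 + Pj (xstar - x0)) = (xstar - x0) - P (xstar - x0) from by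
    rw [hPj, sub_add_eq_sub_sub]]
  rw [← hsum]
  simp only [hanorm, hPj]
  exact main
end

section
/- Let A₀, A₁, …, A_m be symmetric positive-definite n×n matrices, and let Y₁, …, Y_m be matrices with Y_k ∈ ℝⁿˣʸᵏ. Suppose Y₁ᵀ A₀ Y₁ = I, and for each k ∈ {1,…,m−1}, Y_{k+1} = [Y_k, W_k] where W_k satisfies Y_kᵀ A_k W_k = 0 and W_kᵀ A_k W_k = I. Then ‖Y_mᵀ A_m Y_m − I‖₂ ≤ Σ_{k=1}^{m} ‖Y_k‖₂² ‖A_k − A_{k−1}‖₂. -/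
open Matrix

/-- Spectral norm (ℓ²-operator norm) of a real matrix. -/
noncomputable def specNorm {m n : Type*} [Fintype m] [Fintype n] [DecidableEq n]
    (M : Matrix m n ℝ) : ℝ :=
  ‖LinearMap.toContinuousLinearMap (Matrix.toEuclideanLin M)‖

section helpers
open scoped Matrix.Norms.L2Operator

lemma specNorm_eq_norm {m n : Type*} [Fintype m] [Fintype n] [DecidableEq n]
    (M : Matrix m n ℝ) : specNorm M = ‖M‖ := rfl

lemma l2norm_one_le (ι : Type*) [Fintype ι] [DecidableEq ι] :
    ‖(1 : Matrix ι ι ℝ)‖ ≤ 1 := by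
  rw [Matrix.cstar_norm_def, _root_.map_one]
  exact ContinuousLinearMap.norm_id_le

lemma l2norm_transpose {a b : Type*} [Fintype a] [Fintype b] [DecidableEq a] [DecidableEq b]
    (P : Matrix a b ℝ) : ‖Pᵀ‖ = ‖P‖ := by
  rw [← Matrix.conjTranspose_eq_transpose_of_trivial, Matrix.l2_opNorm_conjTranspose]

lemma l2norm_le_one {a b : Type*} [Fintype a] [Fintype b] [DecidableEq a] [DecidableEq b]
    (P : Matrix a b ℝ) (h : Pᵀ * P = 1) : ‖P‖ ≤ 1 := by
  have h1 : ‖Pᴴ * P‖ = ‖P‖ * ‖P‖ := Matrix.l2_opNorm_conjTranspose_mul_self P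
  rw [Matrix.conjTranspose_eq_transpose_of_trivial, h] at h1
  nlinarith [norm_nonneg P, l2norm_one_le b]

lemma l2norm_submatrix_le {a b a' b' : Type*} [Fintype a] [Fintype b] [Fintype a'] [Fintype b']
    [DecidableEq a] [DecidableEq b] [DecidableEq a'] [DecidableEq b']
    (M : Matrix a b ℝ) (e₁ : a' ≃ a) (e₂ : b' ≃ b) :
    ‖M.submatrix e₁ e₂‖ ≤ ‖M‖ := by
  have hP : ((1 : Matrix a a ℝ).submatrix ⇑e₁ id) * M = M.submatrix ⇑e₁ id := by
    have := Matrix.submatrix_mul_equiv (1 : Matrix a a ℝ) M ⇑e₁ (Equiv.refl a) id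
    simpa using this
  have hQ : (M.submatrix ⇑e₁ id) * ((1 : Matrix b b ℝ).submatrix id ⇑e₂)
      = M.submatrix ⇑e₁ ⇑e₂ := by
    have := Matrix.submatrix_mul_equiv M (1 : Matrix b b ℝ) ⇑e₁ (Equiv.refl b) ⇑e₂
    simpa using this
  have hPn : ‖(1 : Matrix a a ℝ).submatrix ⇑e₁ id‖ ≤ 1 := by
    apply l2norm_le_one
    rw [Matrix.transpose_submatrix, Matrix.transpose_one]
    simp
  have hQn : ‖(1 : Matrix b b ℝ).submatrix id ⇑e₂‖ ≤ 1 := by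
    apply l2norm_le_one
    rw [Matrix.transpose_submatrix, Matrix.transpose_one]
    have := Matrix.submatrix_mul_equiv (1 : Matrix b b ℝ) (1 : Matrix b b ℝ) ⇑e₂ (Equiv.refl b) ⇑e₂
    simpa using this
  calc ‖M.submatrix ⇑e₁ ⇑e₂‖
      = ‖((1 : Matrix a a ℝ).submatrix ⇑e₁ id) * M * ((1 : Matrix b b ℝ).submatrix id ⇑e₂)‖ := by
        rw [hP, hQ]
    _ ≤ ‖((1 : Matrix a a ℝ).submatrix ⇑e₁ id) * M‖ * ‖(1 : Matrix b b ℝ).submatrix id ⇑e₂‖ :=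
        Matrix.l2_opNorm_mul _ _
    _ ≤ ‖(1 : Matrix a a ℝ).submatrix ⇑e₁ id‖ * ‖M‖ * ‖(1 : Matrix b b ℝ).submatrix id ⇑e₂‖ := by
        have := Matrix.l2_opNorm_mul ((1 : Matrix a a ℝ).submatrix ⇑e₁ id) M
        have h0 : (0:ℝ) ≤ ‖(1 : Matrix b b ℝ).submatrix id ⇑e₂‖ := norm_nonneg _
        nlinarith
    _ ≤ ‖M‖ * ‖(1 : Matrix b b ℝ).submatrix id ⇑e₂‖ := by
        have := mul_le_of_le_one_left (norm_nonneg M) hPn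
        have h0 : (0:ℝ) ≤ ‖(1 : Matrix b b ℝ).submatrix id ⇑e₂‖ := norm_nonneg _
        nlinarith
    _ ≤ ‖M‖ := mul_le_of_le_one_right (norm_nonneg M) hQn

lemma l2norm_fromBlocks_le {a b c d : Type*} [Fintype a] [Fintype b] [Fintype c] [Fintype d]
    [DecidableEq a] [DecidableEq b] [DecidableEq c] [DecidableEq d]
    (B : Matrix a b ℝ) :
    ‖Matrix.fromBlocks B 0 0 (0 : Matrix c d ℝ)‖ ≤ ‖B‖ := by
  set J₁ : Matrix (a ⊕ c) a ℝ := Matrix.fromRows 1 0 with hJ₁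
  set J₂ : Matrix b (b ⊕ d) ℝ := Matrix.fromCols 1 0 with hJ₂
  have key : Matrix.fromBlocks B 0 0 (0 : Matrix c d ℝ) = J₁ * B * J₂ := by
    rw [hJ₁, hJ₂, Matrix.fromRows_mul, Matrix.fromRows_mul_fromCols]
    simp
  have hJ₁n : ‖J₁‖ ≤ 1 := by
    apply l2norm_le_one
    rw [hJ₁, Matrix.transpose_fromRows, Matrix.fromCols_mul_fromRows]
    simp
  have hJ₂n : ‖J₂‖ ≤ 1 := by
    have : ‖J₂ᵀ‖ ≤ 1 := by
      apply l2norm_le_one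
      rw [Matrix.transpose_transpose, hJ₂, Matrix.transpose_fromCols,
        Matrix.fromCols_mul_fromRows]
      simp
    rwa [l2norm_transpose] at this
  calc ‖Matrix.fromBlocks B 0 0 (0 : Matrix c d ℝ)‖ = ‖J₁ * B * J₂‖ := by rw [key]
    _ ≤ ‖J₁ * B‖ * ‖J₂‖ := Matrix.l2_opNorm_mul _ _
    _ ≤ ‖J₁‖ * ‖B‖ * ‖J₂‖ := by
        have := Matrix.l2_opNorm_mul J₁ B
        nlinarith [norm_nonneg J₂]
    _ ≤ ‖B‖ * ‖J₂‖ := by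
        have := mul_le_of_le_one_left (norm_nonneg B) hJ₁n
        nlinarith [norm_nonneg J₂]
    _ ≤ ‖B‖ := mul_le_of_le_one_right (norm_nonneg B) hJ₂n

lemma l2norm_sandwich {n : ℕ} {ι : Type*} [Fintype ι] [DecidableEq ι]
    (Y : Matrix (Fin n) ι ℝ) (Δ : Matrix (Fin n) (Fin n) ℝ) :
    ‖Yᵀ * Δ * Y‖ ≤ ‖Y‖ ^ 2 * ‖Δ‖ := by
  calc ‖Yᵀ * Δ * Y‖ ≤ ‖Yᵀ * Δ‖ * ‖Y‖ := Matrix.l2_opNorm_mul _ _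
    _ ≤ ‖Yᵀ‖ * ‖Δ‖ * ‖Y‖ := by
        have := Matrix.l2_opNorm_mul Yᵀ Δ
        nlinarith [norm_nonneg Y]
    _ = ‖Y‖ ^ 2 * ‖Δ‖ := by rw [l2norm_transpose]; ring

lemma submatrix_conj {n : ℕ} {α β : Type*} [Fintype α] [Fintype β]
    (C : Matrix (Fin n) α ℝ) (A : Matrix (Fin n) (Fin n) ℝ) (e : β → α) :
    (C.submatrix id e)ᵀ * A * (C.submatrix id e) = (Cᵀ * A * C).submatrix e e := by
  ext i j
  simp [Matrix.mul_apply]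

end helpers

/-- Theorem 5 (wellConditioned), abstract form: if `Y₁ᵀ A₀ Y₁ = I` and at each step
`Y_{k+1} = [Y_k, W_k]` with `Y_kᵀ A_k W_k = 0` and `W_kᵀ A_k W_k = I`, then
`‖Y_mᵀ A_m Y_m − I‖₂ ≤ Σ_{k=1}^m ‖Y_k‖₂² ‖A_k − A_{k−1}‖₂`. -/
theorem stmt13 {n : ℕ} (m : ℕ) (hm : 1 ≤ m)
    (A : ℕ → Matrix (Fin n) (Fin n) ℝ) (hA : ∀ k ≤ m, (A k).PosDef)
    (ι : ℕ → Type) [∀ k, Fintype (ι k)] [∀ k, DecidableEq (ι k)]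
    (κ : ℕ → Type) [∀ k, Fintype (κ k)] [∀ k, DecidableEq (κ k)]
    (Y : ∀ k, Matrix (Fin n) (ι k) ℝ)
    (W : ∀ k, Matrix (Fin n) (κ k) ℝ)
    (e : ∀ k, ι (k + 1) ≃ (ι k ⊕ κ k))
    (h1 : (Y 1)ᵀ * A 0 * Y 1 = 1)
    (hcat : ∀ k, 1 ≤ k → k < m →
      Y (k + 1) = (Matrix.fromCols (Y k) (W k)).submatrix id (e k))
    (horth : ∀ k, 1 ≤ k → k < m → (Y k)ᵀ * A k * W k = 0)
    (hWnorm : ∀ k, 1 ≤ k → k < m → (W k)ᵀ * A k * W k = 1) :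
    specNorm ((Y m)ᵀ * A m * Y m - 1)
      ≤ ∑ k ∈ Finset.Icc 1 m, specNorm (Y k) ^ 2 * specNorm (A k - A (k - 1)) := by
  open scoped Matrix.Norms.L2Operator in
  simp only [specNorm_eq_norm]
  induction m, hm using Nat.le_induction with
  | base =>
    rw [show Finset.Icc 1 1 = {1} from rfl, Finset.sum_singleton]
    have key : (Y 1)ᵀ * A 1 * Y 1 - 1 = (Y 1)ᵀ * (A 1 - A 0) * Y 1 := by
      rw [Matrix.mul_sub, Matrix.sub_mul, h1]
    rw [key]
    simpa using l2norm_sandwich (Y 1) (A 1 - A 0)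
  | succ m hm IH =>
    have hAm : ∀ k ≤ m, (A k).PosDef := fun k hk => hA k (hk.trans (Nat.le_succ m))
    have IH' := IH hAm (fun k h1 h2 => hcat k h1 (h2.trans (Nat.lt_succ_self m)))
      (fun k h1 h2 => horth k h1 (h2.trans (Nat.lt_succ_self m)))
      (fun k h1 h2 => hWnorm k h1 (h2.trans (Nat.lt_succ_self m)))
    -- key block step
    have hsymm : (A m)ᵀ = A m := by
      have := (hA m (Nat.le_succ m)).isHermitian
      rwa [Matrix.IsHermitian, Matrix.conjTranspose_eq_transpose_of_trivial] at this
    have hWY : (W m)ᵀ * A m * (Y m) = 0 := by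
      have h0 := horth m hm (Nat.lt_succ_self m)
      have h2 := congrArg Matrix.transpose h0
      simpa [Matrix.transpose_mul, hsymm, Matrix.mul_assoc] using h2
    have hblock : (Y (m+1))ᵀ * A m * Y (m+1) - 1
        = (Matrix.fromBlocks ((Y m)ᵀ * A m * Y m - 1) 0 0
            (0 : Matrix (κ m) (κ m) ℝ)).submatrix (e m) (e m) := by
      rw [hcat m hm (Nat.lt_succ_self m)]
      rw [submatrix_conj]
      have hC : (Matrix.fromCols (Y m) (W m))ᵀ * A m * Matrix.fromCols (Y m) (W m)
          = Matrix.fromBlocks ((Y m)ᵀ * A m * Y m) ((Y m)ᵀ * A m * W m)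
              ((W m)ᵀ * A m * Y m) ((W m)ᵀ * A m * W m) := by
        rw [Matrix.transpose_fromCols, Matrix.fromRows_mul,
          Matrix.fromRows_mul_fromCols]
      rw [hC, horth m hm (Nat.lt_succ_self m), hWY, hWnorm m hm (Nat.lt_succ_self m)]
      set G := (Y m)ᵀ * A m * Y m with hG
      have hfb : Matrix.fromBlocks G 0 0 (1 : Matrix (κ m) (κ m) ℝ)
          - (1 : Matrix (ι m ⊕ κ m) (ι m ⊕ κ m) ℝ)
          = Matrix.fromBlocks (G - 1) 0 0 (0 : Matrix (κ m) (κ m) ℝ) := by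
        rw [← Matrix.fromBlocks_one]
        ext (i | i) (j | j) <;> simp [Matrix.fromBlocks]
      have h2 : (Matrix.fromBlocks G 0 0 (1 : Matrix (κ m) (κ m) ℝ)).submatrix (e m) (e m)
          - (1 : Matrix (ι (m+1)) (ι (m+1)) ℝ)
          = ((Matrix.fromBlocks G 0 0 (1 : Matrix (κ m) (κ m) ℝ))
              - (1 : Matrix (ι m ⊕ κ m) (ι m ⊕ κ m) ℝ)).submatrix (e m) (e m) := by
        ext i j
        simp [Matrix.one_apply, EmbeddingLike.apply_eq_iff_eq]
      rw [h2, hfb]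
    have hkey : ‖(Y (m+1))ᵀ * A m * Y (m+1) - 1‖ ≤ ‖(Y m)ᵀ * A m * Y m - 1‖ := by
      rw [hblock]
      calc ‖(Matrix.fromBlocks ((Y m)ᵀ * A m * Y m - 1) 0 0
            (0 : Matrix (κ m) (κ m) ℝ)).submatrix (e m) (e m)‖
          ≤ ‖Matrix.fromBlocks ((Y m)ᵀ * A m * Y m - 1) 0 0 (0 : Matrix (κ m) (κ m) ℝ)‖ :=
            l2norm_submatrix_le _ (e m) (e m)
        _ ≤ ‖(Y m)ᵀ * A m * Y m - 1‖ := l2norm_fromBlocks_le _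
    have hsplit : (Y (m+1))ᵀ * A (m+1) * Y (m+1) - 1
        = (Y (m+1))ᵀ * (A (m+1) - A m) * Y (m+1) + ((Y (m+1))ᵀ * A m * Y (m+1) - 1) := by
      rw [Matrix.mul_sub, Matrix.sub_mul]; abel
    calc ‖(Y (m+1))ᵀ * A (m+1) * Y (m+1) - 1‖
        ≤ ‖(Y (m+1))ᵀ * (A (m+1) - A m) * Y (m+1)‖ + ‖(Y (m+1))ᵀ * A m * Y (m+1) - 1‖ := by
          rw [hsplit]; exact norm_add_le _ _
      _ ≤ ‖Y (m+1)‖ ^ 2 * ‖A (m+1) - A m‖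
            + ∑ k ∈ Finset.Icc 1 m, ‖Y k‖ ^ 2 * ‖A k - A (k - 1)‖ := by
          gcongr
          · exact l2norm_sandwich _ _
          · exact hkey.trans IH'
      _ = ∑ k ∈ Finset.Icc 1 (m+1), ‖Y k‖ ^ 2 * ‖A k - A (k - 1)‖ := by
          rw [Finset.sum_Icc_succ_top (by omega : 1 ≤ m + 1)]
          simp [add_comm]
end
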